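/- Let F be a field and X an integral separated scheme of finite type over F. Then X admits a finite open cover X = U₁ ∪ ⋯ ∪ U_n such that each Uᵢ is an affine open and each coordinate ring 𝒪_X(Uᵢ) is spanned by units. -/

import Mathlib

open AlgebraicGeometry CategoryTheory Opposite

universe u

/-- A commutative ring is *spanned by units* if every element is a finite
(possibly empty) sum of units. -/
def SpannedByUnits (R : Type*) [CommRing R] : Prop :=
  ∀ x : R, ∃ s : Multiset Rˣ, (s.map (fun u => (u : R))).sum = x

section SbuSubring

variable (R : Type*) [CommRing R]

lemma sbu_norm (s : Multiset Rˣ) :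
    (s.map (fun u => (u : R))).sum = (s.map Units.val).sum := by
  show (Multiset.map (fun u => u) (s.bind fun a => {Units.val a})).sum = _
  rw [Multiset.bind_singleton, Multiset.map_id']

variable {R}

/-- The set of sums of units. -/
def sbuSet : Set R := {x | ∃ s : Multiset Rˣ, (s.map Units.val).sum = x}

lemma sbuSet_zero_mem : (0 : R) ∈ sbuSet := ⟨0, rfl⟩

lemma sbuSet_unit_mem {x : R} (hx : IsUnit x) : x ∈ sbuSet := by
  obtain ⟨u, rfl⟩ := hx
  exact ⟨{u}, by simp⟩

lemma sbuSet_one_mem : (1 : R) ∈ sbuSet := sbuSet_unit_mem isUnit_one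

lemma sbuSet_add_mem {x y : R} (hx : x ∈ sbuSet) (hy : y ∈ sbuSet) :
    x + y ∈ sbuSet := by
  obtain ⟨s, rfl⟩ := hx
  obtain ⟨t, rfl⟩ := hy
  exact ⟨s + t, by simp⟩

lemma sbuSet_neg_mem {x : R} (hx : x ∈ sbuSet) : -x ∈ sbuSet := by
  obtain ⟨s, rfl⟩ := hx
  refine ⟨s.map (fun u => -u), ?_⟩
  induction s using Multiset.induction with
  | empty => simp
  | cons a s ih => simp [ih, neg_add, add_comm]

lemma sbuSet_unit_mul_mem (u : Rˣ) {x : R} (hx : x ∈ sbuSet) :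
    (u : R) * x ∈ sbuSet := by
  obtain ⟨s, rfl⟩ := hx
  refine ⟨s.map (fun v => u * v), ?_⟩
  induction s using Multiset.induction with
  | empty => simp
  | cons a s ih => simp [ih, mul_add, Multiset.sum_map_mul_left]

lemma sbuSet_mul_mem {x y : R} (hx : x ∈ sbuSet) (hy : y ∈ sbuSet) :
    x * y ∈ sbuSet := by
  obtain ⟨s, rfl⟩ := hx
  induction s using Multiset.induction with
  | empty =>
    rw [Multiset.map_zero, Multiset.sum_zero, zero_mul]
    exact sbuSet_zero_mem
  | cons a s ih =>
    simp only [Multiset.map_cons, Multiset.sum_cons, add_mul]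
    exact sbuSet_add_mem (sbuSet_unit_mul_mem a hy) ih

variable (R) in
/-- Sums of units form a subring. -/
def sbuSubring : Subring R where
  carrier := sbuSet
  zero_mem' := sbuSet_zero_mem
  one_mem' := sbuSet_one_mem
  add_mem' := sbuSet_add_mem
  neg_mem' := sbuSet_neg_mem
  mul_mem' := sbuSet_mul_mem

lemma spannedByUnits_of_sbuSubring_eq_top
    (h : ∀ x : R, x ∈ sbuSubring R) : SpannedByUnits R := by
  intro x
  obtain ⟨s, hs⟩ := h x
  exact ⟨s, by rw [sbu_norm]; exact hs⟩

end SbuSubring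

/-- Key algebraic lemma: if `A` is generated as a ring by the image of `φ` together with a
finite set `s`, the images in `B` of elements of the range of `φ` are zero or units, the
images of elements of `s` are sums of units, and every element of `B` is (image of `A`) times
a unit, then `B` is spanned by units. -/
lemma spannedByUnits_of_generators {R A B : Type*} [CommRing R] [CommRing A] [CommRing B]
    (φ : R →+* A) (ψ : A →+* B) (s : Finset A)
    (hgen : Subring.closure (Set.range φ ∪ (s : Set A)) = ⊤)
    (hR : ∀ r : R, ψ (φ r) = 0 ∨ IsUnit (ψ (φ r)))
    (hs : ∀ a ∈ s, ψ a ∈ sbuSubring B)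
    (hsurj : ∀ b : B, ∃ (a : A) (u : Bˣ), b = ψ a * u) :
    SpannedByUnits B := by
  have key : ∀ a : A, ψ a ∈ sbuSubring B := by
    have hle : Subring.closure (Set.range φ ∪ (s : Set A)) ≤ (sbuSubring B).comap ψ := by
      refine Subring.closure_le.mpr ?_
      rintro a (⟨r, rfl⟩ | ha)
      · rcases hR r with h | h
        · show ψ (φ r) ∈ sbuSubring B
          rw [h]; exact sbuSet_zero_mem
        · exact sbuSet_unit_mem h
      · exact hs a ha
    intro a
    exact hle (hgen ▸ Subring.mem_top a)
  refine spannedByUnits_of_sbuSubring_eq_top (fun b => ?_)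
  obtain ⟨a, u, rfl⟩ := hsurj b
  exact sbuSet_mul_mem (key a) (sbuSet_unit_mem u.isUnit)

/-- Let `X` be an integral separated scheme of finite type over a field `F`.  Then `X`
admits a finite open cover by affine opens `U₁, …, U_n` such that each coordinate ring
`𝒪_X(Uᵢ)` is spanned by units. -/
theorem exists_finite_affine_cover_spannedByUnits
    (F : Type u) [Field F] (X : Scheme.{u}) (f : X ⟶ Spec (CommRingCat.of F))
    [IsIntegral X] [IsSeparated f] [LocallyOfFiniteType f] [QuasiCompact f] :
    ∃ (n : ℕ) (U : Fin n → X.Opens),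
      (⨆ i, U i) = ⊤ ∧
      ∀ i, IsAffineOpen (U i) ∧ SpannedByUnits Γ(X, U i) := by
  classical
  have hcomp : CompactSpace X := (quasiCompact_iff_compactSpace f).mp inferInstance
  -- Local statement: every point has an affine open neighbourhood whose ring of sections is
  -- spanned by units.
  have key : ∀ x : X, ∃ W : X.Opens, x ∈ W ∧ IsAffineOpen W ∧ SpannedByUnits Γ(X, W) := by
    intro x
    obtain ⟨_, ⟨V, hV, rfl⟩, hxV, -⟩ :=
      X.isBasis_affineOpens.exists_subset_of_mem_open (Set.mem_univ x) isOpen_univ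
    -- the structure map on sections over `V` is of finite type
    have e : V ≤ f ⁻¹ᵁ ⊤ := le_top
    set φ : Γ(Spec (CommRingCat.of F), ⊤) →+* Γ(X, V) := (f.appLE ⊤ V e).hom with hφ
    have hft : RingHom.FiniteType φ :=
      LocallyOfFiniteType.finiteType_of_affine_subset
        f (isAffineOpen_top _) hV e
    letI : Algebra Γ(Spec (CommRingCat.of F), ⊤) Γ(X, V) := φ.toAlgebra
    obtain ⟨s, hs⟩ := hft.out
    have hgen : Subring.closure (Set.range φ ∪ (s : Set Γ(X, V))) = ⊤ := by
      have h1 := congrArg Subalgebra.toSubring hs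
      rwa [Algebra.adjoin_eq_ring_closure, RingHom.algebraMap_toAlgebra,
        Algebra.top_toSubring] at h1
    -- choose, for each generator `a`, either `a` or `a - 1` not vanishing at `x`
    set ba : Γ(X, V) → Γ(X, V) := fun a => if x ∈ X.basicOpen a then a else a - 1 with hba_def
    have hba : ∀ a : Γ(X, V), x ∈ X.basicOpen (ba a) := by
      intro a
      by_cases h : x ∈ X.basicOpen a
      · simpa [hba_def, h] using h
      · have hnu : ¬IsUnit (X.presheaf.germ V x hxV a) :=
          fun hu => h ((X.mem_basicOpen a x hxV).mpr hu)
        have : IsUnit (X.presheaf.germ V x hxV (a - 1)) := by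
          rw [map_sub, map_one]
          have := IsLocalRing.isUnit_one_sub_self_of_mem_nonunits
            (X.presheaf.germ V x hxV a) hnu
          simpa using this.neg
        simp only [hba_def, if_neg h]
        exact (X.mem_basicOpen (a - 1) x hxV).mpr this
    set g : Γ(X, V) := ∏ a ∈ s, ba a with hg_def
    have hxg : x ∈ X.basicOpen g := by
      refine Finset.prod_induction ba (fun y => x ∈ X.basicOpen y) ?_ ?_ (fun a _ => hba a)
      · intro u v hu hv
        rw [X.basicOpen_mul]
        exact ⟨hu, hv⟩
      · show x ∈ X.basicOpen (1 : Γ(X, V))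
        rw [X.basicOpen_of_isUnit isUnit_one]
        exact hxV
    -- the basic open `D(g)` is our neighbourhood
    refine ⟨X.basicOpen g, hxg, hV.basicOpen g, ?_⟩
    set ψ : Γ(X, V) →+* Γ(X, X.basicOpen g) :=
      (X.presheaf.map (homOfLE (X.basicOpen_le g)).op).hom with hψ
    letI : Algebra Γ(X, V) Γ(X, X.basicOpen g) := ψ.toAlgebra
    haveI hloc : IsLocalization.Away g Γ(X, X.basicOpen g) :=
      hV.isLocalization_of_eq_basicOpen g (homOfLE (X.basicOpen_le g)) rfl
    have hψg : IsUnit (ψ g) :=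
      IsLocalization.map_units (M := Submonoid.powers g) Γ(X, X.basicOpen g)
        ⟨g, Submonoid.mem_powers g⟩
    have hψba : ∀ a ∈ s, IsUnit (ψ (ba a)) := by
      intro a ha
      refine isUnit_of_dvd_unit ?_ hψg
      have : ψ g = ∏ b ∈ s, ψ (ba b) := map_prod ψ ba s
      rw [this]
      exact Finset.dvd_prod_of_mem _ ha
    refine spannedByUnits_of_generators φ ψ s hgen ?_ ?_ ?_
    · -- constants are zero or units
      intro r
      set eqv := (Scheme.ΓSpecIso (CommRingCat.of F)).commRingCatIsoToRingEquiv
      rcases eq_or_ne (eqv r) 0 with h | h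
      · left
        have : r = 0 := by
          have := congrArg eqv.symm h
          simpa using this
        rw [this, map_zero, map_zero]
      · right
        have : IsUnit r := by
          have hu : IsUnit (eqv r) := IsUnit.mk0 (G₀ := F) (eqv r) h
          have := hu.map eqv.symm.toRingHom
          simpa using this
        exact (this.map φ).map ψ
    · -- generators are sums of units
      intro a ha
      have hu := hψba a ha
      by_cases h : x ∈ X.basicOpen a
      · have : ba a = a := by simp [hba_def, h]
        rw [this] at hu
        exact sbuSet_unit_mem hu
      · have hba_eq : ba a = a - 1 := by simp [hba_def, h]
        have : ψ a = ψ (ba a) + 1 := by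
          rw [hba_eq, map_sub, map_one]; ring
        rw [this]
        exact sbuSet_add_mem (sbuSet_unit_mem hu) sbuSet_one_mem
    · -- surjectivity up to units
      intro b
      obtain ⟨⟨a, m⟩, hm⟩ := IsLocalization.surj (M := Submonoid.powers g) b
      have hmu : IsUnit ((algebraMap Γ(X, V) Γ(X, X.basicOpen g)) (m : Γ(X, V))) :=
        IsLocalization.map_units (M := Submonoid.powers g) Γ(X, X.basicOpen g) m
      refine ⟨a, hmu.unit⁻¹, ?_⟩
      rw [Units.eq_mul_inv_iff_mul_eq]
      exact hm
  -- Globalize using quasi-compactness.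
  choose W hmem haff hspan using key
  obtain ⟨t, ht⟩ := IsCompact.elim_finite_subcover isCompact_univ
    (fun x : X => (W x : Set X)) (fun x => (W x).2) (fun y _ => Set.mem_iUnion.mpr ⟨y, hmem y⟩)
  refine ⟨Fintype.card t, fun i => W ((Fintype.equivFin t).symm i : t), ?_, ?_⟩
  · rw [eq_top_iff]
    intro y _
    have := ht (Set.mem_univ y)
    simp only [Set.mem_iUnion] at this
    obtain ⟨z, hz, hy⟩ := this
    refine TopologicalSpace.Opens.mem_iSup.mpr ⟨Fintype.equivFin t ⟨z, hz⟩, ?_⟩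
    simpa using hy
  · intro i
    exact ⟨haff _, hspan _⟩
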